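/- Let G = P ⋊ R be a finite group where P is a normal Sylow p-subgroup of G and R is an abelian p'-Hall subgroup with C_R(P) = {e}. Then there exists x ∈ P such that R ∩ R^x = {e}. -/

import Mathlib

open Subgroup
open scoped commutatorElement

/-- stabilizer of `v` under the action via `f` -/
def stabS {R' V : Type*} [Group R'] [Group V] (f : R' →* MulAut V) (v : V) : Subgroup R' where
  carrier := {s | f s v = v}
  one_mem' := by simp
  mul_mem' := by
    intro a b ha hb
    simp only [Set.mem_setOf_eq, map_mul] at *
    simp [MulAut.mul_apply, hb, ha]
  inv_mem' := by
    intro a ha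
    simp only [Set.mem_setOf_eq] at *
    have := congrArg (f a⁻¹) ha
    simpa [← MulAut.mul_apply, ← map_mul] using this.symm

@[simp] lemma mem_stabS {R' V : Type*} [Group R'] [Group V] (f : R' →* MulAut V) (v : V)
    (s : R') : s ∈ stabS f v ↔ f s v = v := Iff.rfl

/-- Lemma A: a finite "abelian" group acting coprimely on a finite abelian group has a
regular vector (stabilizer contained in the kernel of the action). -/
lemma regular_vector {R' V : Type*} [Group R'] [Finite R'] [CommGroup V] [Finite V]
    (hcomm : ∀ a b : R', a * b = b * a)
    (f : R' →* MulAut V) (hco : Nat.Coprime (Nat.card R') (Nat.card V)) :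
    ∃ v : V, ∀ s : R', f s v = v → f s = 1 := by
  classical
  by_cases hV : Nat.card V = 1
  · have : Subsingleton V := Nat.card_eq_one_iff_unique.mp (by simp [hV]) |>.1
    exact ⟨1, fun s _ => MulEquiv.ext fun w => Subsingleton.elim _ _⟩
  have hV1 : 1 < Nat.card V := by
    have h0 : Nat.card V ≠ 0 := Nat.card_ne_zero.mpr ⟨⟨1⟩, inferInstance⟩
    omega
  have := Fintype.ofFinite V
  -- pick v with minimal stabilizer
  obtain ⟨v, -, hmin⟩ := Finset.exists_min_image (Finset.univ : Finset V)
    (fun w => Nat.card (stabS f w)) ⟨1, Finset.mem_univ 1⟩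
  set D : Subgroup R' := stabS f v with hD
  -- coprime arithmetic
  set n : ℕ := Nat.card D with hn
  have hndvd : n ∣ Nat.card R' := Subgroup.card_subgroup_dvd_card D
  have hnco : Nat.Coprime n (Nat.card V) := Nat.Coprime.coprime_dvd_left hndvd hco
  obtain ⟨m, -, hm⟩ := Nat.exists_mul_mod_eq_one_of_coprime hnco hV1
  have hpow : ∀ g : V, g ^ (n * m) = g := by
    intro g
    conv_lhs => rw [← Nat.div_add_mod (n * m) (Nat.card V)]
    rw [pow_add, pow_mul, hm, pow_one]
    simp [pow_card_eq_one']
  have := Fintype.ofFinite D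
  -- the averaging homomorphism
  set φ : V →* V :=
    { toFun := fun w => ∏ d : D, f d w
      map_one' := by simp
      map_mul' := by
        intro a b
        simp only [map_mul]
        rw [← Finset.prod_mul_distrib] } with hφ
  set ψ : V →* V := (powMonoidHom m).comp φ with hψ
  have hψ_apply : ∀ w, ψ w = (φ w) ^ m := fun w => rfl
  -- fixed subgroup of D
  set W : Subgroup V :=
    { carrier := {w | ∀ s ∈ D, f s w = w}
      one_mem' := by simp
      mul_mem' := by intro a b ha hb s hs; simp [map_mul, ha s hs, hb s hs]
      inv_mem' := by intro a ha s hs; simp [ha s hs] } with hW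
  have hmemW : ∀ w : V, w ∈ W ↔ ∀ s ∈ D, f s w = w := fun w => Iff.rfl
  have hvW : v ∈ W := fun s hs => hs
  -- φ lands in W
  have hφW : ∀ w, φ w ∈ W := by
    intro w e he
    show f e (∏ d : D, f d w) = ∏ d : D, f d w
    rw [map_prod]
    calc ∏ d : D, f e (f d w) = ∏ d : D, f ((⟨e, he⟩ : D) * d) w := by
          refine Finset.prod_congr rfl fun d _ => ?_
          show f e (f ↑d w) = f (e * ↑d) w
          rw [map_mul]; rfl
      _ = ∏ d : D, f d w := Equiv.prod_comp (Equiv.mulLeft (⟨e, he⟩ : D)) (fun d => f ↑d w)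
  have hψW : ∀ w, ψ w ∈ W := fun w => by rw [hψ_apply]; exact pow_mem (hφW w) m
  -- φ on W is the n-th power
  have hφ_fix : ∀ w ∈ W, φ w = w ^ n := by
    intro w hw
    show (∏ d : D, f d w) = w ^ n
    rw [Finset.prod_congr rfl fun (d : D) _ => hw d d.2, Finset.prod_const,
      Finset.card_univ, hn, Nat.card_eq_fintype_card]
  have hψ_fix : ∀ w ∈ W, ψ w = w := by
    intro w hw
    rw [hψ_apply, hφ_fix w hw, ← pow_mul, hpow]
  -- equivariance
  have hφ_equiv : ∀ (s : R') (w : V), φ (f s w) = f s (φ w) := by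
    intro s w
    show (∏ d : D, f d (f s w)) = f s (∏ d : D, f d w)
    rw [map_prod]
    refine Finset.prod_congr rfl fun d _ => ?_
    rw [← MulAut.mul_apply, ← map_mul, hcomm, map_mul, MulAut.mul_apply]
  have hψ_equiv : ∀ (s : R') (w : V), ψ (f s w) = f s (ψ w) := by
    intro s w
    rw [hψ_apply, hψ_apply, hφ_equiv, map_pow]
  -- W is R'-invariant
  have hWinv : ∀ (s : R'), ∀ w ∈ W, f s w ∈ W := by
    intro s w hw e he
    rw [← MulAut.mul_apply, ← map_mul, hcomm, map_mul, MulAut.mul_apply, hw e he]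
  by_cases hker : ∀ u : V, ψ u = 1 → u = 1
  · -- everything is in W, so D acts trivially
    have hallW : ∀ w : V, w ∈ W := by
      intro w
      have h1 : ψ ((ψ w)⁻¹ * w) = 1 := by
        rw [map_mul, map_inv, hψ_fix (ψ w) (hψW w), inv_mul_cancel]
      have hw : ψ w = w := inv_mul_eq_one.mp (hker _ h1)
      rw [← hw]; exact hψW w
    refine ⟨v, fun s hs => ?_⟩
    exact MulEquiv.ext fun w => hallW w s hs
  · push_neg at hker
    obtain ⟨u, hu1, hu2⟩ := hker
    exfalso
    -- W ∩ ker ψ = 1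
    have hWK : ∀ w ∈ W, ψ w = 1 → w = 1 := by
      intro w hw h1
      rw [← hψ_fix w hw, h1]
    have hDu : ∃ d ∈ D, f d u ≠ u := by
      by_contra h
      push_neg at h
      exact hu2 (hWK u (fun s hs => h s hs) hu1)
    obtain ⟨d, hd, hdu⟩ := hDu
    -- stabilizer of v*u is strictly contained in D
    have hsub : ∀ s ∈ stabS f (v * u), f s v = v ∧ f s u = u := by
      intro s hs
      have heq : f s v * f s u = v * u := by rw [← map_mul]; exact hs
      have h1 : v⁻¹ * f s v = u * (f s u)⁻¹ := by
        rw [inv_mul_eq_iff_eq_mul, ← mul_assoc, ← heq]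
        group
      have hWl : v⁻¹ * f s v ∈ W := mul_mem (inv_mem hvW) (hWinv s v hvW)
      have hKl : ψ (v⁻¹ * f s v) = 1 := by
        rw [h1, map_mul, map_inv, hψ_equiv, hu1, map_one, inv_one, mul_one]
      have hfv : f s v = v := (inv_mul_eq_one.mp (hWK _ hWl hKl)).symm
      refine ⟨hfv, ?_⟩
      have := heq
      rw [hfv] at this
      exact mul_left_cancel this
    have hdnot : d ∉ stabS f (v * u) := fun h => hdu (hsub d h).2
    have hle : (stabS f (v * u) : Set R') ⊂ (D : Set R') := by
      constructor
      · intro s hs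
        exact (hsub s hs).1
      · intro h
        exact hdnot (h hd)
    have hcard : Nat.card (stabS f (v * u)) < Nat.card D := by
      have h2 := Set.Finite.card_lt_card (Set.toFinite ((D : Set R'))) hle
      exact h2
    exact absurd (hmin (v * u) (Finset.mem_univ _)) (by omega)


/-- The subgroup of automorphisms acting trivially modulo the Frattini subgroup. -/
def frattiniKernel (H : Type*) [Group H] : Subgroup (MulAut H) where
  carrier := {σ | ∀ y : H, σ y * y⁻¹ ∈ frattini H}
  one_mem' := by intro y; simpa using one_mem (frattini H)
  mul_mem' := by
    intro a b ha hb y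
    have : (a * b) y * y⁻¹ = (a (b y) * (b y)⁻¹) * (b y * y⁻¹) := by
      simp [MulAut.mul_apply, mul_assoc]
    rw [this]
    exact mul_mem (ha (b y)) (hb y)
  inv_mem' := by
    intro a ha y
    have h := ha (a⁻¹ y)
    have h2 : a (a⁻¹ y) = y := by
      rw [← MulAut.mul_apply, mul_inv_cancel]; rfl
    rw [h2] at h
    have h3 : a⁻¹ y * y⁻¹ = (y * (a⁻¹ y)⁻¹)⁻¹ := by group
    rw [h3]
    exact inv_mem h

/-- Burnside: a nontrivial automorphism of a finite `p`-group acting trivially on the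
Frattini quotient has `p`-power order: any prime dividing its order is `p`. -/
lemma burnside_prime {H : Type*} [Group H] [Finite H] {p : ℕ} (hp : p.Prime)
    (hH : IsPGroup p H) {σ : MulAut H} (hσ : σ ∈ frattiniKernel H)
    {q : ℕ} (hq : q.Prime) (hdvd : q ∣ orderOf σ) : q = p := by
  classical
  haveI : Fact p.Prime := ⟨hp⟩
  haveI : Fact q.Prime := ⟨hq⟩
  -- replace σ by an element of order exactly q
  have hfin : IsOfFinOrder σ := by
    rcases isOfFinOrder_of_finite σ with h
    exact h
  obtain ⟨τ, hτmem, hτord⟩ : ∃ τ : MulAut H, τ ∈ frattiniKernel H ∧ orderOf τ = q := by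
    refine ⟨σ ^ (orderOf σ / q), pow_mem hσ _, ?_⟩
    exact orderOf_pow_orderOf_div (by simpa using hfin.orderOf_pos.ne') hdvd
  -- the set of "Frattini tuples"
  let T := {t : H → H // ∀ y : H, t y * y⁻¹ ∈ frattini H}
  -- cardinality of T is a power of p
  have hTcard : ∃ N : ℕ, Nat.card T = p ^ N := by
    have e : T ≃ (H → frattini H) :=
      { toFun := fun t y => ⟨t.1 y * y⁻¹, t.2 y⟩
        invFun := fun g => ⟨fun y => g y * y, fun y => by simpa using (g y).2⟩
        left_inv := fun t => by ext y; simp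
        right_inv := fun g => by ext y; simp }
    obtain ⟨a, ha⟩ := (IsPGroup.iff_card.mp (hH.to_subgroup (frattini H)))
    refine ⟨a * Nat.card H, ?_⟩
    rw [Nat.card_congr e, Nat.card_fun, ha, ← pow_mul]
  obtain ⟨N, hN⟩ := hTcard
  -- action of ⟨τ⟩ on T
  let C := Subgroup.zpowers τ
  have hCK : C ≤ frattiniKernel H := (Subgroup.zpowers_le).mpr hτmem
  letI : SMul C T := ⟨fun g t => ⟨fun y => g.1 (t.1 y), fun y => by
    have h1 : (g.1 : MulAut H) (t.1 y) * (t.1 y)⁻¹ ∈ frattini H := hCK g.2 (t.1 y)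
    have : g.1 (t.1 y) * y⁻¹ = (g.1 (t.1 y) * (t.1 y)⁻¹) * (t.1 y * y⁻¹) := by group
    rw [this]
    exact mul_mem h1 (t.2 y)⟩⟩
  letI : MulAction C T :=
    { one_smul := fun t => by
        apply Subtype.ext; funext y; rfl
      mul_smul := fun g h t => by
        apply Subtype.ext; funext y; rfl }
  -- any automorphism in C fixing some t ∈ T is trivial
  have hfree : ∀ (e : MulAut H) (t : T), (∀ y, e (t.1 y) = t.1 y) → e = 1 := by
    intro e t het
    have hgen : Subgroup.closure (Set.range t.1) = ⊤ := by
      have hsup : Subgroup.closure (Set.range t.1) ⊔ frattini H = ⊤ := by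
        rw [eq_top_iff]
        intro y _
        have : y = (t.1 y * y⁻¹)⁻¹ * t.1 y := by group
        rw [this]
        exact mul_mem (Subgroup.mem_sup_right (inv_mem (t.2 y)))
          (Subgroup.mem_sup_left (Subgroup.subset_closure ⟨y, rfl⟩))
      exact frattini_nongenerating hsup
    have key : ∀ z ∈ Subgroup.closure (Set.range t.1), e z = z := by
      intro z hz
      induction hz using Subgroup.closure_induction with
      | mem w hw => obtain ⟨y, rfl⟩ := hw; exact het y
      | one => exact map_one e
      | mul a b _ _ ha hb => rw [map_mul, ha, hb]
      | inv a _ ha => rw [map_inv, ha]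
    apply MulEquiv.ext
    intro z
    show e z = z
    exact key z (hgen ▸ Subgroup.mem_top z)
  -- no fixed points
  have hfp : IsEmpty (MulAction.fixedPoints C T) := by
    rw [isEmpty_iff]
    rintro ⟨t, ht⟩
    have h1 : (⟨τ, Subgroup.mem_zpowers τ⟩ : C) • t = t := ht _
    have h2 : ∀ y, τ (t.1 y) = t.1 y := by
      intro y
      exact congrFun (congrArg Subtype.val h1) y
    have := hfree τ t h2
    rw [this, orderOf_one] at hτord
    exact hq.ne_one hτord.symm
  -- ⟨τ⟩ is a q-group
  have hCq : IsPGroup q C := by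
    apply IsPGroup.of_card
    rw [Nat.card_zpowers, hτord, pow_one]
  have hmod := hCq.card_modEq_card_fixedPoints T
  have h0 : Nat.card (MulAction.fixedPoints C T) = 0 := @Nat.card_of_isEmpty _ hfp
  rw [hN, h0] at hmod
  have : q ∣ p ^ N := (Nat.modEq_zero_iff_dvd.mp hmod)
  exact (Nat.prime_dvd_prime_iff_eq hq hp).mp (hq.dvd_of_dvd_pow this)

/-- In a finite `p`-group, the commutator subgroup is contained in the Frattini subgroup. -/
lemma commutator_le_frattini' {H : Type*} [Group H] [Finite H] {p : ℕ} (hp : p.Prime)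
    (hH : IsPGroup p H) : commutator H ≤ frattini H := by
  haveI : Fact p.Prime := ⟨hp⟩
  haveI : Group.IsNilpotent H := hH.isNilpotent
  have hnc : NormalizerCondition H := normalizerCondition_of_isNilpotent
  have hM : ∀ M : Subgroup H, IsCoatom M → commutator H ≤ M := by
    intro M hMco
    haveI hMnorm : M.Normal := Subgroup.NormalizerCondition.normal_of_coatom M hnc hMco
    rw [_root_.commutator_def, Subgroup.commutator_le]
    intro g1 _ g2 _
    -- quotient has no proper nontrivial subgroups
    have hsub : ∀ K : Subgroup (H ⧸ M), K = ⊥ ∨ K = ⊤ := by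
      intro K
      have hle : M ≤ K.comap (QuotientGroup.mk' M) := by
        intro x hx
        have h1 : QuotientGroup.mk' M x = 1 := by
          rw [← MonoidHom.mem_ker, QuotientGroup.ker_mk']; exact hx
        rw [Subgroup.mem_comap, h1]; exact one_mem K
      by_cases hKM : K.comap (QuotientGroup.mk' M) = M
      · left
        have hK : K = (K.comap (QuotientGroup.mk' M)).map (QuotientGroup.mk' M) :=
          (Subgroup.map_comap_eq_self_of_surjective (QuotientGroup.mk'_surjective M) K).symm
        rw [hK, hKM, Subgroup.map_eq_bot_iff, QuotientGroup.ker_mk']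
      · right
        have hlt : M < K.comap (QuotientGroup.mk' M) := lt_of_le_of_ne hle (Ne.symm hKM)
        have htop := hMco.2 _ hlt
        have hK : K = (K.comap (QuotientGroup.mk' M)).map (QuotientGroup.mk' M) :=
          (Subgroup.map_comap_eq_self_of_surjective (QuotientGroup.mk'_surjective M) K).symm
        rw [hK, htop]
        exact Subgroup.map_top_of_surjective _ (QuotientGroup.mk'_surjective M)
    have hQcomm : ∀ a b : H ⧸ M, a * b = b * a := by
      by_cases htriv : ∀ a : H ⧸ M, a = 1
      · intro a b; rw [htriv a, htriv b]
      · push_neg at htriv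
        obtain ⟨g, hg⟩ := htriv
        have hzp : Subgroup.zpowers g = ⊤ := by
          rcases hsub (Subgroup.zpowers g) with h | h
          · exact absurd (Subgroup.zpowers_eq_bot.mp h) hg
          · exact h
        intro a b
        obtain ⟨i, hi⟩ := Subgroup.mem_zpowers_iff.mp (hzp ▸ Subgroup.mem_top a)
        obtain ⟨j, hj⟩ := Subgroup.mem_zpowers_iff.mp (hzp ▸ Subgroup.mem_top b)
        rw [← hi, ← hj, zpow_mul_comm]
    have h1 : QuotientGroup.mk' M ⁅g1, g2⁆ = 1 := by
      rw [map_commutatorElement, commutatorElement_eq_one_iff_mul_comm]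
      exact hQcomm _ _
    rw [← QuotientGroup.ker_mk' M]
    exact h1
  calc commutator H ≤ ⨅ M ∈ {M : Subgroup H | IsCoatom M}, M := by
        simp only [le_iInf_iff]
        exact fun M hMc => hM M hMc
    _ = frattini H := by
        rw [frattini, Order.radical]

lemma mem_frattiniKernel {H : Type*} [Group H] (σ : MulAut H) :
    σ ∈ frattiniKernel H ↔ ∀ y : H, σ y * y⁻¹ ∈ frattini H := Iff.rfl


def conjS {G : Type*} [Group G] (g : G) (H : Subgroup G) : Subgroup G :=
  H.map (MulAut.conj g⁻¹).toMonoidHom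

/-- Let `G = P ⋊ R` with `P` a normal Sylow `p`-subgroup and `R` an abelian
p'-Hall subgroup with `C_R(P) = {e}`. Then there is `x ∈ P` with
`R ∩ R^x = {e}`. -/
theorem stmt12 {G : Type*} [Group G] [Finite G] (p : ℕ) (hp : p.Prime)
    (P R : Subgroup G)
    (hPnorm : P.Normal) (hPp : IsPGroup p P) (hPsyl : ¬ p ∣ P.index)
    (hsup : P ⊔ R = ⊤) (hinf : P ⊓ R = ⊥)
    (hRab : ∀ a ∈ R, ∀ b ∈ R, a * b = b * a)
    (hRp' : ¬ p ∣ Nat.card R) (hRindex : ∃ k : ℕ, R.index = p ^ k)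
    (hCent : R ⊓ Subgroup.centralizer (P : Set G) = ⊥) :
    ∃ x ∈ P, R ⊓ conjS x R = ⊥ := by
  classical
  haveI : Fact p.Prime := ⟨hp⟩
  haveI := hPnorm
  -- Step 1: reduce to finding x ∈ P commuting only with 1 in R
  suffices h : ∃ x ∈ P, ∀ r ∈ R, x * r = r * x → r = 1 by
    obtain ⟨x, hxP, hx⟩ := h
    refine ⟨x, hxP, ?_⟩
    rw [eq_bot_iff]
    intro r hr
    rw [Subgroup.mem_inf] at hr
    obtain ⟨hrR, hrC⟩ := hr
    have hrC' : r ∈ R.map (MulAut.conj x⁻¹).toMonoidHom := hrC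
    obtain ⟨s, hsR, hs⟩ := Subgroup.mem_map.mp hrC'
    have hs' : x⁻¹ * s * x = r := by
      rw [← hs]; simp [MulAut.conj_apply]
    have hPR : s * r⁻¹ ∈ P ⊓ R := by
      rw [Subgroup.mem_inf]
      constructor
      · have h1 : s = x * r * x⁻¹ := by rw [← hs']; group
        have h2 : s * r⁻¹ = x * (r * x⁻¹ * r⁻¹) := by rw [h1]; group
        rw [h2]
        exact mul_mem hxP (hPnorm.conj_mem x⁻¹ (inv_mem hxP) r)
      · exact mul_mem hsR (inv_mem hrR)
    rw [hinf, Subgroup.mem_bot] at hPR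
    have hsr : s = r := by
      have := mul_inv_eq_one.mp hPR; exact this
    rw [hsr] at hs'
    have h5 : x * (x⁻¹ * r * x) = x * r := by rw [hs']
    have hcomm : x * r = r * x := by
      have h6 : r * x = x * r := by
        simpa [mul_assoc] using h5
      exact h6.symm
    exact Subgroup.mem_bot.mpr (hx r hrR hcomm)
  -- Step 2: the Frattini quotient machinery
  set Φ : Subgroup ↥P := frattini ↥P with hΦdef
  have hPp' : IsPGroup p ↥P := hPp
  have hVcomm : ∀ a b : ↥P ⧸ Φ, a * b = b * a := by
    intro a b
    induction a using QuotientGroup.induction_on with | H a =>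
    induction b using QuotientGroup.induction_on with | H b =>
    show QuotientGroup.mk (a * b) = QuotientGroup.mk (b * a)
    rw [QuotientGroup.eq]
    have heq : (a * b)⁻¹ * (b * a) = ⁅b⁻¹, a⁻¹⁆ := by
      rw [commutatorElement_def]; group
    rw [heq]
    exact commutator_le_frattini' hp hPp'
      (_root_.commutator_def ↥P ▸ Subgroup.commutator_mem_commutator
        (Subgroup.mem_top _) (Subgroup.mem_top _))
  letI instCG : CommGroup (↥P ⧸ Φ) :=
    { (inferInstance : Group (↥P ⧸ Φ)) with mul_comm := hVcomm }
  have hchar : ∀ e : MulAut ↥P, Φ.map e.toMonoidHom = Φ := fun e =>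
    Subgroup.characteristic_iff_map_eq.mp inferInstance e
  set θ : MulAut ↥P →* MulAut (↥P ⧸ Φ) :=
    { toFun := fun e => QuotientGroup.congr Φ Φ e (hchar e)
      map_one' := by
        apply MulEquiv.ext
        intro z
        induction z using QuotientGroup.induction_on with | H y => rfl
      map_mul' := by
        intro e1 e2
        apply MulEquiv.ext
        intro z
        induction z using QuotientGroup.induction_on with | H y => rfl } with hθdef
  set c : ↥R →* MulAut ↥P := MulAut.conjNormal.comp R.subtype with hcdef
  set f : ↥R →* MulAut (↥P ⧸ Φ) := θ.comp c with hfdef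
  -- coprimality
  obtain ⟨nP, hnP⟩ := IsPGroup.iff_card.mp hPp'
  have hdvd : Nat.card (↥P ⧸ Φ) ∣ Nat.card ↥P := by
    rw [Subgroup.card_eq_card_quotient_mul_card_subgroup Φ]
    exact Dvd.intro _ rfl
  obtain ⟨k, -, hk⟩ := (Nat.dvd_prime_pow hp).mp (hnP ▸ hdvd)
  have hco : Nat.Coprime (Nat.card ↥R) (Nat.card (↥P ⧸ Φ)) := by
    rw [hk]
    exact (Nat.Coprime.pow_right k ((hp.coprime_iff_not_dvd).mpr hRp').symm)
  have hcommR : ∀ a b : ↥R, a * b = b * a := fun a b =>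
    Subtype.ext (hRab a a.2 b b.2)
  obtain ⟨v, hv⟩ := regular_vector hcommR f hco
  -- Burnside: trivial action on the quotient forces the element to be 1
  have hker : ∀ s : ↥R, f s = 1 → (s : G) = 1 := by
    intro s hfs
    set σ : MulAut ↥P := c s with hσdef
    have hσK : σ ∈ frattiniKernel ↥P := by
      rw [mem_frattiniKernel]
      intro y
      have h2 : (QuotientGroup.mk (σ y) : ↥P ⧸ Φ) = QuotientGroup.mk y := by
        have h3 : f s (QuotientGroup.mk y) = QuotientGroup.mk y := by rw [hfs]; rfl
        exact h3
      have h4 : (σ y)⁻¹ * y ∈ Φ := QuotientGroup.eq.mp h2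
      have h5 : σ y * y⁻¹ = (σ y) * ((σ y)⁻¹ * y)⁻¹ * (σ y)⁻¹ := by group
      rw [h5]
      exact Subgroup.Normal.conj_mem inferInstance _ (inv_mem h4) _
    have hordσ : orderOf σ = 1 := by
      by_contra hne
      obtain ⟨q, hq, hqdvd⟩ := Nat.exists_prime_and_dvd hne
      have hqp := burnside_prime hp hPp' hσK hq hqdvd
      have h3 : orderOf σ ∣ orderOf s := orderOf_map_dvd c s
      have h4 : q ∣ Nat.card ↥R := hqdvd.trans (h3.trans (orderOf_dvd_natCard s))
      rw [hqp] at h4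
      exact hRp' h4
    have hσ1 : σ = 1 := orderOf_eq_one_iff.mp hordσ
    have hcent : (s : G) ∈ Subgroup.centralizer (P : Set G) := by
      rw [Subgroup.mem_centralizer_iff]
      intro y hy
      have h6 : σ ⟨y, hy⟩ = ⟨y, hy⟩ := by rw [hσ1]; rfl
      have h7 : (s : G) * y * (s : G)⁻¹ = y := by
        have := congrArg Subtype.val h6
        simpa [hσdef, hcdef] using this
      calc y * (s:G) = ((s:G) * y * (s:G)⁻¹) * (s:G) := by rw [h7]
        _ = (s:G) * y := by group
    have h8 : (s : G) ∈ R ⊓ Subgroup.centralizer (P : Set G) := ⟨s.2, hcent⟩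
    rw [hCent] at h8
    exact Subgroup.mem_bot.mp h8
  -- lift v and conclude
  obtain ⟨xt, hxt⟩ := QuotientGroup.mk_surjective v
  refine ⟨xt.1, xt.2, ?_⟩
  intro r hrR hxr
  have hfix : f (⟨r, hrR⟩ : ↥R) v = v := by
    rw [← hxt]
    have h9 : c ⟨r, hrR⟩ xt = xt := by
      apply Subtype.ext
      show r * (xt : G) * r⁻¹ = (xt : G)
      rw [← hxr]; group
    show QuotientGroup.mk (c ⟨r, hrR⟩ xt) = QuotientGroup.mk xt
    rw [h9]
  exact hker _ (hv _ hfix)
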